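/- Let 𝒢 = (G_1,...,G_T) be a temporal graph with grow pace 1 (at most one edge added and at most one edge removed between consecutive snapshots) in which every snapshot is Δ-bounded. Then χ^t(𝒢) ≤ Δ+2. -/

import Mathlib

open SimpleGraph

/-- A coloring is proper for a graph if adjacent vertices get different colors. -/
def ProperColoring {V α : Type*} (H : SimpleGraph V) (c : V → α) : Prop :=
  ∀ u v, H.Adj u v → c u ≠ c v

/-- Two colorings are compatible for two consecutive snapshots if, for every edge of
either snapshot, the first coloring of one endpoint differs from the second coloring
of the other endpoint. -/
def Compatible {V α : Type*} (G G' : SimpleGraph V) (c c' : V → α) : Prop :=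
  ∀ u v, (G ⊔ G').Adj u v → c u ≠ c' v

/-- The union of the snapshots at times `i-1`, `i`, `i+1` (those that exist, with
snapshots indexed by `1,…,T`). -/
def Smash {V : Type*} (G : ℕ → SimpleGraph V) (T i : ℕ) : SimpleGraph V :=
  (if 2 ≤ i then G (i - 1) else ⊥) ⊔ G i ⊔ (if i < T then G (i + 1) else ⊥)

/-- A temporal coloring of a temporal graph with snapshots `G 1, …, G T`. -/
def TemporalColoring {V α : Type*} (T : ℕ) (G : ℕ → SimpleGraph V) (c : ℕ → V → α) : Prop :=
  (∀ i, 1 ≤ i → i ≤ T → ProperColoring (Smash G T i) (c i)) ∧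
  (∀ i, 1 ≤ i → i < T → Compatible (G i) (G (i + 1)) (c i) (c (i + 1)))

/-- The temporal chromatic number: the least `k` admitting a temporal `k`-coloring. -/
noncomputable def temporalChromaticNumber {V : Type*} (T : ℕ) (G : ℕ → SimpleGraph V) : ℕ :=
  sInf {k | ∃ c : ℕ → V → Fin k, TemporalColoring T G c}

/-- A graph is `d`-degenerate if every nonempty (finite) subgraph has a vertex of
degree at most `d`. -/
def Degenerate {V : Type*} (H : SimpleGraph V) (d : ℕ) : Prop :=
  ∀ s : Finset V, s.Nonempty → ∃ v ∈ s, ({u | u ∈ s ∧ H.Adj v u} : Set V).ncard ≤ d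

/-- A graph is `Δ`-bounded if every vertex has degree at most `Δ`. -/
def DegLE {V : Type*} (H : SimpleGraph V) (Δ : ℕ) : Prop :=
  ∀ v, (H.neighborSet v).ncard ≤ Δ

/- ### Auxiliary lemmas -/

section Aux

variable {V : Type*} [Fintype V]

/-- There is a color avoiding the colors of a set of at most `Δ+1` vertices. -/
lemma fresh_color {Δ : ℕ} (N : Set V) (hN : N.ncard ≤ Δ + 1)
    (c : V → Fin (Δ + 2)) : ∃ a : Fin (Δ + 2), ∀ v ∈ N, c v ≠ a := by
  by_contra h
  push_neg at h
  have hsub : (Set.univ : Set (Fin (Δ + 2))) ⊆ c '' N := by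
    intro a _
    obtain ⟨v, hv, hcv⟩ := h a
    exact ⟨v, hv, hcv⟩
  have h1 : (Set.univ : Set (Fin (Δ + 2))).ncard ≤ (c '' N).ncard :=
    Set.ncard_le_ncard hsub (Set.toFinite _)
  have h2 : (c '' N).ncard ≤ N.ncard := Set.ncard_image_le (Set.toFinite _)
  have h3 : (Set.univ : Set (Fin (Δ + 2))).ncard = Δ + 2 := by
    rw [Set.ncard_univ]
    simp
  omega

lemma proper_mono {α : Type*} {A B : SimpleGraph V} (h : A ≤ B) {c : V → α}
    (hB : ProperColoring B c) : ProperColoring A c :=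
  fun u v huv => hB u v (h huv)

/-- Greedy coloring: a graph of maximum degree at most `Δ+1` is properly
`(Δ+2)`-colorable. -/
lemma greedy {Δ : ℕ} (H : SimpleGraph V)
    (hd : ∀ v, (H.neighborSet v).ncard ≤ Δ + 1) :
    ∃ c : V → Fin (Δ + 2), ProperColoring H c := by
  classical
  suffices h : ∀ s : Finset V, ∃ c : V → Fin (Δ + 2),
      ∀ u v, u ∈ s → v ∈ s → H.Adj u v → c u ≠ c v by
    obtain ⟨c, hc⟩ := h Finset.univ
    exact ⟨c, fun u v huv => hc u v (Finset.mem_univ u) (Finset.mem_univ v) huv⟩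
  intro s
  induction s using Finset.induction_on with
  | empty => exact ⟨fun _ => ⟨0, by omega⟩, by simp⟩
  | insert a s ha ih =>
    obtain ⟨c, hc⟩ := ih
    obtain ⟨col, hcol⟩ := fresh_color (H.neighborSet a) (hd a) c
    refine ⟨Function.update c a col, ?_⟩
    intro u v hu hv huv
    by_cases hu' : u = a
    · by_cases hv' : v = a
      · exact absurd (hu' ▸ hv' ▸ huv) (H.irrefl)
      · rw [hu', Function.update_self, Function.update_of_ne hv']
        exact fun h => hcol v (hu' ▸ huv) h.symm
    · by_cases hv' : v = a
      · rw [hv', Function.update_self, Function.update_of_ne hu']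
        exact hcol u (hv' ▸ huv.symm)
      · rw [Function.update_of_ne hu', Function.update_of_ne hv']
        exact hc u v ((Finset.mem_insert.mp hu).resolve_left hu')
          ((Finset.mem_insert.mp hv).resolve_left hv') huv

lemma nbhd_diff {A B : SimpleGraph V} (x : V) :
    A.neighborSet x ⊆ B.neighborSet x ∪ {w | s(x, w) ∈ A.edgeSet \ B.edgeSet} := by
  intro w hw
  by_cases h : B.Adj x w
  · exact Or.inl h
  · exact Or.inr ⟨hw, fun hc => h ((B.mem_edgeSet).mp hc)⟩

lemma slice_ncard_le_one (x : V) {D : Set (Sym2 V)} (hD : D.ncard ≤ 1) :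
    ({w | s(x, w) ∈ D} : Set V).ncard ≤ 1 := by
  rw [Set.ncard_le_one_iff (Set.toFinite _)]
  intro a b ha hb
  have := (Set.ncard_le_one_iff (Set.toFinite _)).mp hD ha hb
  exact Sym2.congr_right.mp this

lemma neighborSet_sup' (A B : SimpleGraph V) (v : V) :
    (A ⊔ B).neighborSet v = A.neighborSet v ∪ B.neighborSet v := by
  ext w
  simp [SimpleGraph.mem_neighborSet, SimpleGraph.sup_adj, Set.mem_union]

end Aux

section Main

variable {V : Type*} [Fintype V]

/-- The inductive step: extend the coloring from time `i` to time `i+1`. -/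
lemma step_lemma {Δ T i : ℕ} {G : ℕ → SimpleGraph V}
    (hi1 : 1 ≤ i) (hiT : i < T)
    (hdeg : ∀ v, ((G (i + 1)).neighborSet v).ncard ≤ Δ)
    (hrem : ((G i).edgeSet \ (G (i + 1)).edgeSet).ncard ≤ 1)
    (hadd : i + 1 < T → ((G (i + 2)).edgeSet \ (G (i + 1)).edgeSet).ncard ≤ 1)
    (c : V → Fin (Δ + 2)) (hc : ProperColoring (Smash G T i) c) :
    ∃ c' : V → Fin (Δ + 2),
      ProperColoring (Smash G T (i + 1)) c' ∧ Compatible (G i) (G (i + 1)) c c' := by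
  classical
  -- `c` is proper on `G i ⊔ G (i+1)`
  have hmid : ProperColoring (G i ⊔ G (i + 1)) c := by
    refine proper_mono ?_ hc
    rw [Smash, if_pos hiT]
    exact sup_le (le_sup_of_le_left le_sup_right) le_sup_right
  have hSmash : Smash G T (i + 1) =
      G i ⊔ G (i + 1) ⊔ (if i + 1 < T then G (i + 2) else ⊥) := by
    rw [Smash, if_pos (by omega : 2 ≤ i + 1), Nat.add_sub_cancel]
  set S := Smash G T (i + 1) with hSdef
  by_cases hconf : ProperColoring S c
  · exact ⟨c, hconf, fun u v huv => hmid u v huv⟩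
  -- There is a conflict; it must be on the unique new edge of `G (i+2)`.
  · simp only [ProperColoring, not_forall] at hconf
    obtain ⟨x, y, hxy, hcxy⟩ := hconf
    rw [not_not] at hcxy
    have hxney : x ≠ y := hxy.ne
    have hnotmid : ¬ (G i ⊔ G (i + 1)).Adj x y := fun h => hmid x y h hcxy
    have hSxy : S.Adj x y := hxy
    rw [hSmash] at hSxy
    have hite : (if i + 1 < T then G (i + 2) else ⊥).Adj x y := by
      rcases hSxy with h | h
      · exact absurd h hnotmid
      · exact h
    have hiT2 : i + 1 < T := by
      by_contra h
      rw [if_neg h] at hite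
      exact hite
    rw [if_pos hiT2] at hite
    have hnotG1 : ¬ (G (i + 1)).Adj x y := fun h => hnotmid (Or.inr h)
    have hnotGi : ¬ (G i).Adj x y := fun h => hnotmid (Or.inl h)
    set A2 := (G (i + 2)).edgeSet \ (G (i + 1)).edgeSet with hA2def
    have hA2card : A2.ncard ≤ 1 := hadd hiT2
    have hmemA2 : s(x, y) ∈ A2 := ⟨hite, fun h => hnotG1 (((G (i + 1)).mem_edgeSet).mp h)⟩
    set R := (G i).edgeSet \ (G (i + 1)).edgeSet with hRdef
    have hA2eq : ∀ e ∈ A2, e = s(x, y) := fun e he =>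
      (Set.ncard_le_one_iff (Set.toFinite _)).mp hA2card he hmemA2
    have hReq : ∀ e ∈ R, ∀ e' ∈ R, e = e' := fun e he e' he' =>
      (Set.ncard_le_one_iff (Set.toFinite _)).mp hrem he he'
    -- the key combinatorial claim: one endpoint of the conflict edge has few neighbors
    have key : ∃ z o : V, ((z = x ∧ o = y) ∨ (z = y ∧ o = x)) ∧
        S.neighborSet z ⊆ (G (i + 1)).neighborSet z ∪ {o} := by
      have hNS : ∀ z : V, S.neighborSet z ⊆
          (G i).neighborSet z ∪ (G (i + 1)).neighborSet z ∪ (G (i + 2)).neighborSet z := by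
        intro z w hw
        rw [hSmash, neighborSet_sup', neighborSet_sup'] at hw
        rcases hw with (h | h) | h
        · exact Or.inl (Or.inl h)
        · exact Or.inl (Or.inr h)
        · rw [if_pos hiT2] at h
          exact Or.inr h
      have hN2 : ∀ z o : V, ((z = x ∧ o = y) ∨ (z = y ∧ o = x)) →
          (G (i + 2)).neighborSet z ⊆ (G (i + 1)).neighborSet z ∪ {o} := by
        intro z o hzo w hw
        rcases nbhd_diff (B := G (i + 1)) z hw with h | h
        · exact Or.inl h
        · have := hA2eq _ h
          rcases hzo with ⟨hz, ho⟩ | ⟨hz, ho⟩ <;> subst hz <;> subst ho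
          · exact Or.inr (Sym2.congr_right.mp this)
          · rw [Sym2.eq_swap] at this
            exact Or.inr (Sym2.congr_left.mp this)
      by_cases hDx : ({w | s(x, w) ∈ R} : Set V) ⊆ {y}
      · refine ⟨x, y, Or.inl ⟨rfl, rfl⟩, ?_⟩
        intro w hw
        rcases hNS x hw with (h | h) | h
        · rcases nbhd_diff (B := G (i + 1)) x h with h' | h'
          · exact Or.inl h'
          · exact Or.inr (hDx h')
        · exact Or.inl h
        · exact hN2 x y (Or.inl ⟨rfl, rfl⟩) h
      · -- the removed edge is incident to x but not to y
        have hDy : ({w | s(y, w) ∈ R} : Set V) = ∅ := by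
          rw [Set.not_subset] at hDx
          obtain ⟨w0, hw0, hw0y⟩ := hDx
          ext w
          simp only [Set.mem_setOf_eq, Set.mem_empty_iff_false, iff_false]
          intro hw
          have := hReq _ hw _ hw0
          rw [Sym2.eq_iff] at this
          rcases this with ⟨h1, _⟩ | ⟨h1, h2⟩
          · exact hxney h1.symm
          · exact hw0y (by rw [Set.mem_singleton_iff]; exact h1.symm)
        refine ⟨y, x, Or.inr ⟨rfl, rfl⟩, ?_⟩
        intro w hw
        rcases hNS y hw with (h | h) | h
        · rcases nbhd_diff (B := G (i + 1)) y h with h' | h'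
          · exact Or.inl h'
          · rw [hDy] at h'
            exact absurd h' (Set.notMem_empty w)
        · exact Or.inl h
        · exact hN2 y x (Or.inr ⟨rfl, rfl⟩) h
    obtain ⟨z, o, hzo, hsub⟩ := key
    have hcard : (S.neighborSet z).ncard ≤ Δ + 1 := by
      calc (S.neighborSet z).ncard ≤ ((G (i + 1)).neighborSet z ∪ {o}).ncard :=
            Set.ncard_le_ncard hsub (Set.toFinite _)
        _ ≤ ((G (i + 1)).neighborSet z).ncard + ({o} : Set V).ncard :=
            Set.ncard_union_le _ _
        _ ≤ Δ + 1 := by rw [Set.ncard_singleton]; exact Nat.add_le_add_right (hdeg z) 1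
    obtain ⟨a, ha⟩ := fresh_color (S.neighborSet z) hcard c
    refine ⟨Function.update c z a, ?_, ?_⟩
    · -- properness of the updated coloring on S
      intro u v huv
      by_cases hu : u = z
      · by_cases hv : v = z
        · exact absurd (hu ▸ hv ▸ huv) S.irrefl
        · rw [hu, Function.update_self, Function.update_of_ne hv]
          exact fun h => ha v (hu ▸ huv) h.symm
      · by_cases hv : v = z
        · rw [hv, Function.update_self, Function.update_of_ne hu]
          exact ha u (hv ▸ huv.symm)
        · rw [Function.update_of_ne hu, Function.update_of_ne hv]
          -- conflict-free away from z
          have hSuv : S.Adj u v := huv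
          rw [hSmash] at hSuv
          rcases hSuv with h | h
          · exact hmid u v h
          · rw [if_pos hiT2] at h
            rcases nbhd_diff (B := G (i + 1)) u (h : v ∈ (G (i+2)).neighborSet u) with h' | h'
            · exact hmid u v (Or.inr h')
            · -- s(u,v) ∈ A2, so {u,v} = {x,y}, contradicting u ≠ z, v ≠ z
              exfalso
              have := hA2eq _ h'
              rw [Sym2.eq_iff] at this
              rcases hzo with ⟨hz, _⟩ | ⟨hz, _⟩ <;>
                rcases this with ⟨h1, h2⟩ | ⟨h1, h2⟩ <;>
                  first
                    | exact hu (h1.trans hz.symm)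
                    | exact hv (h2.trans hz.symm)
    · -- compatibility
      intro u v huv
      by_cases hv : v = z
      · rw [hv, Function.update_self]
        have hle : G i ⊔ G (i + 1) ≤ S := by
          rw [hSmash]
          exact le_sup_left
        have : u ∈ S.neighborSet z := hle (hv ▸ huv.symm)
        exact ha u this
      · rw [Function.update_of_ne hv]
        exact hmid u v huv

/-- The base case: a proper coloring of the first smash. -/
lemma base_lemma {Δ T : ℕ} {G : ℕ → SimpleGraph V}
    (hdeg1 : ∀ v, ((G 1).neighborSet v).ncard ≤ Δ)
    (hadd : 1 < T → ((G 2).edgeSet \ (G 1).edgeSet).ncard ≤ 1) :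
    ∃ c : V → Fin (Δ + 2), ProperColoring (Smash G T 1) c := by
  apply greedy
  intro v
  have hS : Smash G T 1 = ⊥ ⊔ G 1 ⊔ (if 1 < T then G 2 else ⊥) := by
    rw [Smash, if_neg (by omega : ¬ 2 ≤ 1)]
  by_cases hT : 1 < T
  · have hsub : (Smash G T 1).neighborSet v ⊆
        (G 1).neighborSet v ∪ {w | s(v, w) ∈ (G 2).edgeSet \ (G 1).edgeSet} := by
      intro w hw
      rw [hS, if_pos hT, neighborSet_sup', neighborSet_sup'] at hw
      rcases hw with (h | h) | h
      · simp at h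
      · exact Or.inl h
      · exact nbhd_diff (B := G 1) v h
    calc ((Smash G T 1).neighborSet v).ncard
        ≤ ((G 1).neighborSet v ∪ {w | s(v, w) ∈ (G 2).edgeSet \ (G 1).edgeSet}).ncard :=
          Set.ncard_le_ncard hsub (Set.toFinite _)
      _ ≤ ((G 1).neighborSet v).ncard
            + ({w | s(v, w) ∈ (G 2).edgeSet \ (G 1).edgeSet} : Set V).ncard :=
          Set.ncard_union_le _ _
      _ ≤ Δ + 1 := Nat.add_le_add (hdeg1 v) (slice_ncard_le_one v (hadd hT))
  · have hsub : (Smash G T 1).neighborSet v ⊆ (G 1).neighborSet v := by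
      intro w hw
      rw [hS, if_neg hT, neighborSet_sup', neighborSet_sup'] at hw
      rcases hw with (h | h) | h
      · simp at h
      · exact h
      · simp at h
    exact le_trans (Set.ncard_le_ncard hsub (Set.toFinite _)) (Nat.le_succ_of_le (hdeg1 v))

end Main

/-- A temporal graph with grow pace 1 whose snapshots are all `Δ`-bounded admits a
temporal `(Δ+2)`-coloring. -/
theorem statement16 {V : Type*} [Fintype V] (Δ T : ℕ) (G : ℕ → SimpleGraph V)
    (hdeg : ∀ i, 1 ≤ i → i ≤ T → DegLE (G i) Δ)
    (hpace : ∀ i, 1 ≤ i → i < T →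
      ((G (i + 1)).edgeSet \ (G i).edgeSet).ncard ≤ 1 ∧
      ((G i).edgeSet \ (G (i + 1)).edgeSet).ncard ≤ 1) :
    ∃ c : ℕ → V → Fin (Δ + 2), TemporalColoring T G c := by
  classical
  have main : ∀ n : ℕ, ∃ c : ℕ → V → Fin (Δ + 2),
      (∀ i, 1 ≤ i → i ≤ T → i ≤ n → ProperColoring (Smash G T i) (c i)) ∧
      (∀ i, 1 ≤ i → i + 1 ≤ T → i + 1 ≤ n →
        Compatible (G i) (G (i + 1)) (c i) (c (i + 1))) := by
    intro n
    induction n with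
    | zero =>
      exact ⟨fun _ _ => ⟨0, by omega⟩, fun i h1 _ h0 => absurd (le_trans h1 h0) (by omega),
        fun i _ _ h0 => absurd h0 (by omega)⟩
    | succ n ih =>
      obtain ⟨c, h1, h2⟩ := ih
      by_cases hnT : n + 1 ≤ T
      · rcases Nat.eq_zero_or_pos n with hn0 | hn1
        · -- base case : color index 1
          subst hn0
          obtain ⟨c1, hc1⟩ := base_lemma (G := G) (T := T)
            (hdeg 1 le_rfl hnT) (fun h => (hpace 1 le_rfl h).1)
          refine ⟨Function.update c 1 c1, ?_, ?_⟩
          · intro i hi _ hin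
            have : i = 1 := by omega
            subst this
            rw [Function.update_self]
            exact hc1
          · intro i hi _ hin
            omega
        · -- inductive step : color index n+1 from index n
          have hcn : ProperColoring (Smash G T n) (c n) :=
            h1 n hn1 (by omega) le_rfl
          obtain ⟨c', hc'1, hc'2⟩ := step_lemma (i := n) hn1 (by omega)
            (hdeg (n + 1) (by omega) hnT)
            (hpace n hn1 (by omega)).2
            (fun h => (hpace (n + 1) (by omega) h).1)
            (c n) hcn
          refine ⟨Function.update c (n + 1) c', ?_, ?_⟩
          · intro i hi hiT hin
            by_cases h : i = n + 1
            · subst h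
              rw [Function.update_self]
              exact hc'1
            · rw [Function.update_of_ne h]
              exact h1 i hi hiT (by omega)
          · intro i hi hiT hin
            by_cases h : i + 1 = n + 1
            · have : i = n := by omega
              subst this
              rw [Function.update_self, Function.update_of_ne (by omega : i ≠ i + 1)]
              exact hc'2
            · rw [Function.update_of_ne h, Function.update_of_ne (by omega : i ≠ n + 1)]
              exact h2 i hi hiT (by omega)
      · exact ⟨c, fun i hi hiT _ => h1 i hi hiT (by omega),
          fun i hi hiT _ => h2 i hi hiT (by omega)⟩
  obtain ⟨c, h1, h2⟩ := main T
  exact ⟨c, fun i hi hiT => h1 i hi hiT hiT, fun i hi hiT => h2 i hi hiT hiT⟩
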